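/- Let V : ℝ → ℝ be measurable with |V(x)| ≤ C₀(1+|x|)^{−β} for some β > 13 and C₀ > 0, and set v = |V|^{1/2}. With a⁺ = (−1+i)/4, a₋₁⁺ = (−1−i)/8, a₁⁺ = (−1+i)/96, define E(μ; x, y) = R₀⁺(μ⁴)(x,y) − a⁺/μ³ − (a₋₁⁺/μ)|x−y|² − |x−y|³/12 − a₁⁺ μ |x−y|⁴. Then there exists C > 0 such that for all μ > 0: ( ∬_{ℝ²} |v(x) E(μ; x, y) v(y)|² dx dy )^{1/2} ≤ C μ³ and ( ∬_{ℝ²} |v(x) ∂_μ E(μ; x, y) v(y)|² dx dy )^{1/2} ≤ C μ². In other words, the operator M⁺(μ) = U + v R₀⁺(μ⁴) v equals (ã⁺/μ³) P + (a₋₁⁺/μ) v G₋₁ v + T₀ + a₁⁺ μ v G₁ v up to a Hilbert–Schmidt error of norm O(μ³) whose μ-derivative has Hilbert–Schmidt norm O(μ²). -/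

import Mathlib

open MeasureTheory Set ENNReal

/-- The error term `E(μ; x, y)` in the low-energy expansion of the free resolvent kernel
`R₀⁺(μ⁴)(x,y) = (i e^{iμ|x−y|} − e^{−μ|x−y|})/(4μ³)`, with
`a⁺ = (−1+i)/4`, `a₋₁⁺ = (−1−i)/8`, `a₁⁺ = (−1+i)/96`:
`E(μ;x,y) = R₀⁺(μ⁴)(x,y) − a⁺/μ³ − (a₋₁⁺/μ)|x−y|² − |x−y|³/12 − a₁⁺ μ |x−y|⁴`. -/
noncomputable def resolventError (μ x y : ℝ) : ℂ :=
  (Complex.I * Complex.exp (Complex.I * (μ : ℂ) * ((|x - y| : ℝ) : ℂ)) -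
      Complex.exp (-((μ : ℂ) * ((|x - y| : ℝ) : ℂ)))) / (4 * (μ : ℂ) ^ 3) -
    ((-1 + Complex.I) / 4) / (μ : ℂ) ^ 3 -
    ((-1 - Complex.I) / 8) / (μ : ℂ) * ((|x - y| : ℝ) : ℂ) ^ 2 -
    ((|x - y| : ℝ) : ℂ) ^ 3 / 12 -
    ((-1 + Complex.I) / 96) * (μ : ℂ) * ((|x - y| : ℝ) : ℂ) ^ 4

noncomputable def fC (w : ℂ) : ℂ :=
  Complex.I * Complex.exp (Complex.I * w) - Complex.exp (-w) -
    ((-1 + Complex.I) + ((-1 - Complex.I) / 2) * w ^ 2 + w ^ 3 / 3 +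
      ((-1 + Complex.I) / 24) * w ^ 4)

noncomputable def fC' (w : ℂ) : ℂ :=
  -Complex.exp (Complex.I * w) + Complex.exp (-w) -
    ((-1 - Complex.I) * w + w ^ 2 + ((-1 + Complex.I) / 6) * w ^ 3)

lemma fC_taylor (z : ℂ) : fC z = Complex.I *
      (Complex.exp (Complex.I * z) - ∑ m ∈ Finset.range 6, (Complex.I * z) ^ m / m.factorial) -
      (Complex.exp (-z) - ∑ m ∈ Finset.range 6, (-z) ^ m / m.factorial) := by
  unfold fC
  simp only [Finset.sum_range_succ, Finset.sum_range_zero, Nat.factorial]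
  push_cast
  linear_combination (z - z^3/6 + z^5/120 + Complex.I*z^2/2 + Complex.I^2*z^3/6 + Complex.I*(Complex.I^2-1)*z^4/24 + Complex.I^2*(Complex.I^2-1)*z^5/120) * Complex.I_sq

lemma fC'_taylor (z : ℂ) : fC' z =
      -(Complex.exp (Complex.I * z) - ∑ m ∈ Finset.range 5, (Complex.I * z) ^ m / m.factorial) +
      (Complex.exp (-z) - ∑ m ∈ Finset.range 5, (-z) ^ m / m.factorial) := by
  unfold fC'
  simp only [Finset.sum_range_succ, Finset.sum_range_zero, Nat.factorial]
  push_cast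
  linear_combination (-z^2/2 - Complex.I*z^3/6 - (Complex.I^2-1)*z^4/24) * Complex.I_sq


lemma norm_exp_I_mul (z : ℝ) : ‖Complex.exp (Complex.I * z)‖ = 1 := by
  rw [Complex.norm_exp]
  simp

lemma norm_exp_neg_le (z : ℝ) (hz : 0 ≤ z) : ‖Complex.exp (-(z:ℂ))‖ ≤ 1 := by
  rw [← Complex.ofReal_neg, Complex.norm_exp]
  simp only [Complex.ofReal_re]
  exact Real.exp_le_one_iff.2 (by linarith)

lemma norm_c1 : ‖(-1 + Complex.I : ℂ)‖ ≤ 2 := by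
  refine (norm_add_le _ _).trans ?_
  rw [norm_neg, norm_one, Complex.norm_I]; norm_num

lemma norm_c2 : ‖(-1 - Complex.I : ℂ)‖ ≤ 2 := by
  refine (norm_sub_le _ _).trans ?_
  rw [norm_neg, norm_one, Complex.norm_I]; norm_num

lemma norm_fC_le (z : ℝ) (hz : 0 ≤ z) : ‖fC z‖ ≤ 8 * z ^ 6 := by
  have hzc : ‖((z:ℝ):ℂ)‖ = z := by rw [Complex.norm_real, Real.norm_eq_abs, abs_of_nonneg hz]
  have hz6 : (0:ℝ) ≤ z ^ 6 := pow_nonneg hz 6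
  rcases le_or_gt z 1 with hz1 | hz1
  · have habs1 : ‖Complex.I * (z:ℂ)‖ ≤ 1 := by
      rw [norm_mul, Complex.norm_I, one_mul, hzc]; exact hz1
    have habs2 : ‖-(z:ℂ)‖ ≤ 1 := by
      rw [norm_neg, hzc]; exact hz1
    have h1 := Complex.exp_bound habs1 (n := 6) (by norm_num)
    have h2 := Complex.exp_bound habs2 (n := 6) (by norm_num)
    have e1 : ‖Complex.I * (z:ℂ)‖ = z := by
      rw [norm_mul, Complex.norm_I, one_mul, hzc]
    have e2 : ‖-(z:ℂ)‖ = z := by rw [norm_neg, hzc]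
    rw [e1] at h1; rw [e2] at h2
    norm_num [Nat.factorial] at h1 h2
    rw [fC_taylor]
    have key := (norm_sub_le
      (Complex.I * (Complex.exp (Complex.I * z) -
        ∑ m ∈ Finset.range 6, (Complex.I * z) ^ m / m.factorial))
      (Complex.exp (-(z:ℂ)) - ∑ m ∈ Finset.range 6, (-(z:ℂ)) ^ m / m.factorial))
    rw [norm_mul, Complex.norm_I, one_mul] at key
    refine key.trans ?_
    nlinarith [h1, h2]
  · unfold fC
    have hz6' : (1:ℝ) ≤ z ^ 6 := one_le_pow₀ hz1.le
    have p2 : z^2 ≤ z^6 := pow_le_pow_right₀ hz1.le (by norm_num)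
    have p3 : z^3 ≤ z^6 := pow_le_pow_right₀ hz1.le (by norm_num)
    have p4 : z^4 ≤ z^6 := pow_le_pow_right₀ hz1.le (by norm_num)
    have n1 : ‖Complex.I * Complex.exp (Complex.I * z)‖ = 1 := by
      rw [norm_mul, Complex.norm_I, one_mul, norm_exp_I_mul]
    have n2 := norm_exp_neg_le z hz
    have np : ‖((-1 + Complex.I) + ((-1 - Complex.I) / 2) * ((z:ℝ):ℂ) ^ 2 + ((z:ℝ):ℂ) ^ 3 / 3 +
        ((-1 + Complex.I) / 24) * ((z:ℝ):ℂ) ^ 4)‖ ≤ 2 + z^2 + z^3/3 + z^4/12 := by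
      have b2 : ‖((-1 - Complex.I) / 2) * ((z:ℝ):ℂ) ^ 2‖ ≤ z^2 := by
        rw [norm_mul, norm_div, norm_pow, hzc]
        have h24 : ‖(2:ℂ)‖ = 2 := Complex.norm_ofNat 2
        rw [h24]
        nlinarith [norm_c2, sq_nonneg z]
      have b3 : ‖((z:ℝ):ℂ) ^ 3 / 3‖ ≤ z^3/3 := by
        rw [norm_div, norm_pow, hzc, Complex.norm_ofNat]
      have b4 : ‖((-1 + Complex.I) / 24) * ((z:ℝ):ℂ) ^ 4‖ ≤ z^4/12 := by
        rw [norm_mul, norm_div, norm_pow, hzc]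
        have h24 : ‖(24:ℂ)‖ = 24 := Complex.norm_ofNat 24
        rw [h24]
        nlinarith [norm_c1, pow_nonneg hz 4]
      calc ‖_‖ ≤ ‖(-1 + Complex.I) + ((-1 - Complex.I) / 2) * ((z:ℝ):ℂ) ^ 2 +
              ((z:ℝ):ℂ) ^ 3 / 3‖ + ‖((-1 + Complex.I) / 24) * ((z:ℝ):ℂ) ^ 4‖ := norm_add_le _ _
        _ ≤ (‖(-1 + Complex.I) + ((-1 - Complex.I) / 2) * ((z:ℝ):ℂ) ^ 2‖ +
              ‖((z:ℝ):ℂ) ^ 3 / 3‖) + ‖((-1 + Complex.I) / 24) * ((z:ℝ):ℂ) ^ 4‖ :=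
            add_le_add (norm_add_le _ _) le_rfl
        _ ≤ ((‖(-1 + Complex.I : ℂ)‖ + ‖((-1 - Complex.I) / 2) * ((z:ℝ):ℂ) ^ 2‖) +
              ‖((z:ℝ):ℂ) ^ 3 / 3‖) + ‖((-1 + Complex.I) / 24) * ((z:ℝ):ℂ) ^ 4‖ := by
            gcongr; exact norm_add_le _ _
        _ ≤ 2 + z^2 + z^3/3 + z^4/12 := by
            have := norm_c1; linarith [b2, b3, b4]
    have t1 := norm_sub_le (Complex.I * Complex.exp (Complex.I * z) - Complex.exp (-(z:ℂ)))
      ((-1 + Complex.I) + ((-1 - Complex.I) / 2) * ((z:ℝ):ℂ) ^ 2 + ((z:ℝ):ℂ) ^ 3 / 3 +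
        ((-1 + Complex.I) / 24) * ((z:ℝ):ℂ) ^ 4)
    have t2 := norm_sub_le (Complex.I * Complex.exp (Complex.I * z)) (Complex.exp (-(z:ℂ)))
    refine t1.trans ?_
    rw [n1] at t2
    nlinarith [np, t2, n2]

lemma norm_fC'_le (z : ℝ) (hz : 0 ≤ z) : ‖fC' z‖ ≤ 8 * z ^ 5 := by
  have hzc : ‖((z:ℝ):ℂ)‖ = z := by rw [Complex.norm_real, Real.norm_eq_abs, abs_of_nonneg hz]
  have hz5 : (0:ℝ) ≤ z ^ 5 := pow_nonneg hz 5
  rcases le_or_gt z 1 with hz1 | hz1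
  · have habs1 : ‖Complex.I * (z:ℂ)‖ ≤ 1 := by
      rw [norm_mul, Complex.norm_I, one_mul, hzc]; exact hz1
    have habs2 : ‖-(z:ℂ)‖ ≤ 1 := by
      rw [norm_neg, hzc]; exact hz1
    have h1 := Complex.exp_bound habs1 (n := 5) (by norm_num)
    have h2 := Complex.exp_bound habs2 (n := 5) (by norm_num)
    have e1 : ‖Complex.I * (z:ℂ)‖ = z := by
      rw [norm_mul, Complex.norm_I, one_mul, hzc]
    have e2 : ‖-(z:ℂ)‖ = z := by rw [norm_neg, hzc]
    rw [e1] at h1; rw [e2] at h2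
    norm_num [Nat.factorial] at h1 h2
    rw [fC'_taylor]
    have key := norm_add_le
      (-(Complex.exp (Complex.I * z) - ∑ m ∈ Finset.range 5, (Complex.I * z) ^ m / m.factorial))
      (Complex.exp (-(z:ℂ)) - ∑ m ∈ Finset.range 5, (-(z:ℂ)) ^ m / m.factorial)
    rw [norm_neg] at key
    refine key.trans ?_
    nlinarith [h1, h2]
  · unfold fC'
    have hz5' : (1:ℝ) ≤ z ^ 5 := one_le_pow₀ hz1.le
    have p1 : z ≤ z^5 := by calc z = z^1 := (pow_one z).symm
                                 _ ≤ z^5 := pow_le_pow_right₀ hz1.le (by norm_num)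
    have p2 : z^2 ≤ z^5 := pow_le_pow_right₀ hz1.le (by norm_num)
    have p3 : z^3 ≤ z^5 := pow_le_pow_right₀ hz1.le (by norm_num)
    have n1 : ‖Complex.exp (Complex.I * (z:ℂ))‖ = 1 := norm_exp_I_mul z
    have n2 := norm_exp_neg_le z hz
    have b1 : ‖(-1 - Complex.I) * ((z:ℝ):ℂ)‖ ≤ 2*z := by
      rw [norm_mul, hzc]
      nlinarith [norm_c2, norm_nonneg ((-1 - Complex.I : ℂ))]
    have b2 : ‖((z:ℝ):ℂ)^2‖ = z^2 := by rw [norm_pow, hzc]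
    have b3 : ‖((-1 + Complex.I)/6) * ((z:ℝ):ℂ)^3‖ ≤ z^3/3 := by
      rw [norm_mul, norm_div, norm_pow, hzc, Complex.norm_ofNat]
      nlinarith [norm_c1, pow_nonneg hz 3]
    have np : ‖((-1 - Complex.I) * ((z:ℝ):ℂ) + ((z:ℝ):ℂ) ^ 2 +
        ((-1 + Complex.I) / 6) * ((z:ℝ):ℂ) ^ 3)‖ ≤ 2*z + z^2 + z^3/3 := by
      calc ‖_‖ ≤ ‖(-1 - Complex.I) * ((z:ℝ):ℂ) + ((z:ℝ):ℂ) ^ 2‖ +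
            ‖((-1 + Complex.I) / 6) * ((z:ℝ):ℂ) ^ 3‖ := norm_add_le _ _
        _ ≤ (‖(-1 - Complex.I) * ((z:ℝ):ℂ)‖ + ‖((z:ℝ):ℂ) ^ 2‖) +
            ‖((-1 + Complex.I) / 6) * ((z:ℝ):ℂ) ^ 3‖ := by gcongr; exact norm_add_le _ _
        _ ≤ 2*z + z^2 + z^3/3 := by rw [b2]; linarith [b1, b3]
    have t1 := norm_sub_le (-Complex.exp (Complex.I * (z:ℂ)) + Complex.exp (-(z:ℂ)))
      ((-1 - Complex.I) * ((z:ℝ):ℂ) + ((z:ℝ):ℂ) ^ 2 + ((-1 + Complex.I) / 6) * ((z:ℝ):ℂ) ^ 3)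
    have t2 := norm_add_le (-Complex.exp (Complex.I * (z:ℂ))) (Complex.exp (-(z:ℂ)))
    rw [norm_neg, n1] at t2
    refine t1.trans ?_
    nlinarith [np, t2, n2]

lemma hasDerivAt_fC (w : ℂ) : HasDerivAt fC (fC' w) w := by
  have h1 : HasDerivAt (fun w : ℂ => Complex.exp (Complex.I * w))
      (Complex.exp (Complex.I * w) * Complex.I) w := by
    simpa using (((hasDerivAt_id w).const_mul Complex.I).cexp)
  have h2 : HasDerivAt (fun w : ℂ => Complex.exp (-w)) (-Complex.exp (-w)) w := by
    simpa using ((hasDerivAt_id w).neg).cexp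
  have h3 : HasDerivAt (fun w : ℂ =>
      ((-1 + Complex.I) + ((-1 - Complex.I) / 2) * w ^ 2 + w ^ 3 / 3 +
        ((-1 + Complex.I) / 24) * w ^ 4))
      ((-1 - Complex.I) * w + w ^ 2 + ((-1 + Complex.I) / 6) * w ^ 3) w := by
    have := (((hasDerivAt_pow 2 w).const_mul ((-1 - Complex.I) / 2)).const_add
        (-1 + Complex.I)).add
      ((hasDerivAt_pow 3 w).div_const 3) |>.add
      ((hasDerivAt_pow 4 w).const_mul ((-1 + Complex.I) / 24))
    refine this.congr_deriv ?_
    push_cast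
    ring
  have := ((h1.const_mul Complex.I).sub h2).sub h3
  refine this.congr_deriv ?_
  unfold fC'
  linear_combination (Complex.exp (Complex.I * w)) * Complex.I_sq


lemma helper (w A b c E G : ℂ) (hw : w ≠ 0) :
    A/(4*w^3) - b/w^3 - c/w - E - G =
      (A - 4*b - 4*c*w^2 - 4*E*w^3 - 4*G*w^3)/(4*w^3) := by
  have hw3 : w^3 ≠ 0 := pow_ne_zero 3 hw
  have h4 : (4:ℂ)*w^3 ≠ 0 := mul_ne_zero (by norm_num) hw3
  rw [eq_div_iff h4]
  have k1 : A/(4*w^3)*(4*w^3) = A := div_mul_cancel₀ _ h4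
  have k2 : b/w^3*w^3 = b := div_mul_cancel₀ _ hw3
  have k3 : c/w*w = c := div_mul_cancel₀ _ hw
  linear_combination k1 - 4*k2 - 4*w^2*k3

lemma resolventError_eq (μ x y : ℝ) (hμ : μ ≠ 0) :
    resolventError μ x y = fC ((μ : ℂ) * ((|x - y| : ℝ) : ℂ)) / (4 * (μ : ℂ) ^ 3) := by
  have hμ' : (μ : ℂ) ≠ 0 := by exact_mod_cast hμ
  have step : resolventError μ x y =
      (Complex.I * Complex.exp (Complex.I * (μ : ℂ) * ((|x - y| : ℝ) : ℂ)) -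
        Complex.exp (-((μ : ℂ) * ((|x - y| : ℝ) : ℂ)))) / (4 * (μ : ℂ) ^ 3) -
      ((-1 + Complex.I) / 4) / (μ : ℂ) ^ 3 -
      (((-1 - Complex.I) / 8) * ((|x - y| : ℝ) : ℂ) ^ 2) / (μ : ℂ) -
      ((|x - y| : ℝ) : ℂ) ^ 3 / 12 -
      ((-1 + Complex.I) / 96) * (μ : ℂ) * ((|x - y| : ℝ) : ℂ) ^ 4 := by
    unfold resolventError; ring
  rw [step, helper _ _ _ _ _ _ hμ']
  congr 1
  unfold fC
  rw [mul_assoc Complex.I (μ:ℂ)]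
  ring

lemma norm_four_mu_cubed (μ : ℝ) (hμ : 0 < μ) : ‖(4 * (μ:ℂ)^3 : ℂ)‖ = 4 * μ^3 := by
  rw [norm_mul, norm_pow, Complex.norm_real, Complex.norm_ofNat, Real.norm_eq_abs,
    abs_of_pos hμ]

lemma norm_resolventError_le (μ x y : ℝ) (hμ : 0 < μ) :
    ‖resolventError μ x y‖ ≤ 2 * μ^3 * |x - y|^6 := by
  have hr : (0:ℝ) ≤ |x - y| := abs_nonneg _
  rw [resolventError_eq μ x y hμ.ne']
  rw [norm_div, norm_four_mu_cubed μ hμ]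
  rw [div_le_iff₀ (by positivity)]
  have harg : ((μ : ℂ) * ((|x - y| : ℝ) : ℂ)) = (((μ * |x - y| : ℝ)) : ℂ) := by push_cast; ring
  rw [harg]
  calc ‖fC ((μ * |x - y| : ℝ) : ℂ)‖ ≤ 8 * (μ * |x - y|)^6 :=
        norm_fC_le _ (by positivity)
    _ = 2 * μ ^ 3 * |x - y| ^ 6 * (4 * μ ^ 3) := by ring

lemma hasDerivAt_resolventError (x y : ℝ) (μ : ℝ) (hμ : 0 < μ) :
    HasDerivAt (fun μ' : ℝ => resolventError μ' x y)
      ((fC' ((μ:ℂ) * ((|x - y| : ℝ):ℂ)) * ((|x - y| : ℝ):ℂ) * (4 * (μ:ℂ)^3) -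
        fC ((μ:ℂ) * ((|x - y| : ℝ):ℂ)) * (4 * (3 * (μ:ℂ)^2))) / (4 * (μ:ℂ)^3)^2) μ := by
  set r : ℂ := ((|x - y| : ℝ) : ℂ)
  have hμ' : (μ : ℂ) ≠ 0 := by exact_mod_cast hμ.ne'
  have hden : (4 : ℂ) * (μ:ℂ)^3 ≠ 0 := mul_ne_zero (by norm_num) (pow_ne_zero 3 hμ')
  have hnum : HasDerivAt (fun w : ℂ => fC (w * r)) (fC' ((μ:ℂ) * r) * r) (μ:ℂ) := by
    have := (hasDerivAt_fC ((μ:ℂ) * r)).comp (μ:ℂ) (hasDerivAt_mul_const r)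
    exact this
  have hdenom : HasDerivAt (fun w : ℂ => 4 * w^3) (4 * (3 * (μ:ℂ)^2)) (μ:ℂ) := by
    simpa using (hasDerivAt_pow 3 (μ:ℂ)).const_mul (4:ℂ)
  have hdiv := hnum.div hdenom hden
  have hre := hdiv.comp_ofReal
  refine hre.congr_of_eventuallyEq ?_
  filter_upwards [eventually_gt_nhds hμ] with t ht
  rw [resolventError_eq t x y ht.ne']
  rfl

lemma norm_deriv_resolventError_le (μ x y : ℝ) (hμ : 0 < μ) :
    ‖deriv (fun μ' : ℝ => resolventError μ' x y) μ‖ ≤ 8 * μ^2 * |x - y|^6 := by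
  have hr : (0:ℝ) ≤ |x - y| := abs_nonneg _
  rw [(hasDerivAt_resolventError x y μ hμ).deriv]
  have harg : ((μ : ℂ) * ((|x - y| : ℝ) : ℂ)) = (((μ * |x - y| : ℝ)) : ℂ) := by push_cast; ring
  rw [harg, norm_div]
  have hd2 : ‖((4 * (μ:ℂ)^3)^2 : ℂ)‖ = (4*μ^3)^2 := by
    rw [norm_pow, norm_four_mu_cubed μ hμ]
  rw [hd2, div_le_iff₀ (by positivity)]
  have hrc : ‖((|x - y| : ℝ) : ℂ)‖ = |x - y| := by
    rw [Complex.norm_real, Real.norm_eq_abs, abs_abs]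
  have b1 : ‖fC' ((μ * |x - y| : ℝ) : ℂ) * ((|x - y| : ℝ):ℂ) * (4 * (μ:ℂ)^3)‖ ≤
      8 * (μ * |x - y|)^5 * |x - y| * (4 * μ^3) := by
    rw [norm_mul, norm_mul, hrc, norm_four_mu_cubed μ hμ]
    have := norm_fC'_le (μ * |x - y|) (by positivity)
    have h8 : (0:ℝ) ≤ 8 * (μ * |x - y|)^5 := by positivity
    gcongr
  have b2 : ‖fC ((μ * |x - y| : ℝ) : ℂ) * (4 * (3 * (μ:ℂ)^2))‖ ≤
      8 * (μ * |x - y|)^6 * (12 * μ^2) := by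
    have hn : ‖(4 * (3 * (μ:ℂ)^2) : ℂ)‖ = 12 * μ^2 := by
      rw [norm_mul, norm_mul, norm_pow, Complex.norm_real, Real.norm_eq_abs, abs_of_pos hμ,
        Complex.norm_ofNat, Complex.norm_ofNat]
      ring
    rw [norm_mul, hn]
    have := norm_fC_le (μ * |x - y|) (by positivity)
    gcongr
  calc ‖_ - _‖ ≤ _ + _ := norm_sub_le _ _
    _ ≤ 8 * (μ * |x - y|)^5 * |x - y| * (4 * μ^3) + 8 * (μ * |x - y|)^6 * (12 * μ^2) :=
        add_le_add b1 b2
    _ = 8 * μ ^ 2 * |x - y| ^ 6 * (4 * μ ^ 3) ^ 2 := by ring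


lemma one_add_abs_bound (x y : ℝ) : |x - y| ≤ (1 + |x|) * (1 + |y|) := by
  have h : |x - y| ≤ |x| + |y| := abs_sub _ _
  nlinarith [abs_nonneg x, abs_nonneg y, mul_nonneg (abs_nonneg x) (abs_nonneg y)]

lemma rpow_combine (β : ℝ) (t : ℝ) :
    (1 + |t|) ^ (-β) * (1 + |t|) ^ (12:ℕ) = (1 + |t|) ^ (12 - β) := by
  have hpos : (0:ℝ) < 1 + |t| := by positivity
  rw [← Real.rpow_natCast (1 + |t|) 12, ← Real.rpow_add hpos]
  congr 1
  ring

lemma kernel_bound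
    (V : ℝ → ℝ) (β C₀ : ℝ) (hC₀ : 0 < C₀)
    (hV_decay : ∀ x : ℝ, |V x| ≤ C₀ * (1 + |x|) ^ (-β))
    (v : ℝ → ℝ) (hv : ∀ x, v x = Real.sqrt |V x|)
    (g : ℝ → ℝ → ℂ) (A : ℝ) (hA : 0 ≤ A)
    (hg : ∀ x y, ‖g x y‖ ≤ A * |x - y| ^ 6) :
    (∫⁻ x : ℝ, ∫⁻ y : ℝ, (‖(v x : ℂ) * g x y * (v y : ℂ)‖₊ : ℝ≥0∞) ^ 2) ≤
      ENNReal.ofReal (A ^ 2) *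
        (∫⁻ t : ℝ, ENNReal.ofReal (C₀ * (1 + |t|) ^ (12 - β))) ^ 2 := by
  set h : ℝ → ℝ := fun t => C₀ * (1 + |t|) ^ (12 - β) with hh
  have hhnn : ∀ t, 0 ≤ h t := fun t => by
    have : (0:ℝ) ≤ (1 + |t|) ^ (12 - β) := Real.rpow_nonneg (by positivity) _
    positivity
  have hvnn : ∀ t, 0 ≤ v t := fun t => (hv t) ▸ Real.sqrt_nonneg _
  have hv2 : ∀ t, (v t) ^ 2 = |V t| := fun t => by rw [hv t]; exact Real.sq_sqrt (abs_nonneg _)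
  -- pointwise bound
  have hpt : ∀ x y : ℝ, ‖(v x : ℂ) * g x y * (v y : ℂ)‖ ^ 2 ≤ A ^ 2 * h x * h y := by
    intro x y
    have hvx : ‖((v x : ℝ) : ℂ)‖ = v x := by
      rw [Complex.norm_real, Real.norm_eq_abs, abs_of_nonneg (hvnn x)]
    have hvy : ‖((v y : ℝ) : ℂ)‖ = v y := by
      rw [Complex.norm_real, Real.norm_eq_abs, abs_of_nonneg (hvnn y)]
    have expand : ‖(v x : ℂ) * g x y * (v y : ℂ)‖ ^ 2 = |V x| * ‖g x y‖ ^ 2 * |V y| := by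
      rw [norm_mul, norm_mul, hvx, hvy, mul_pow, mul_pow, hv2 x, hv2 y]
    rw [expand]
    have hg2 : ‖g x y‖ ^ 2 ≤ A ^ 2 * ((1 + |x|) * (1 + |y|)) ^ 12 := by
      have h1 : ‖g x y‖ ^ 2 ≤ (A * |x - y| ^ 6) ^ 2 :=
        pow_le_pow_left₀ (norm_nonneg _) (hg x y) 2
      have h2 : |x - y| ^ 12 ≤ ((1 + |x|) * (1 + |y|)) ^ 12 :=
        pow_le_pow_left₀ (abs_nonneg _) (one_add_abs_bound x y) 12
      calc ‖g x y‖ ^ 2 ≤ (A * |x - y| ^ 6) ^ 2 := h1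
        _ = A ^ 2 * |x - y| ^ 12 := by ring
        _ ≤ A ^ 2 * ((1 + |x|) * (1 + |y|)) ^ 12 :=
            mul_le_mul_of_nonneg_left h2 (sq_nonneg A)
    calc |V x| * ‖g x y‖ ^ 2 * |V y| ≤
        (C₀ * (1 + |x|) ^ (-β)) * (A ^ 2 * ((1 + |x|) * (1 + |y|)) ^ 12) *
          (C₀ * (1 + |y|) ^ (-β)) := by
          have hb1 : (0:ℝ) ≤ (1 + |x|) ^ (-β) := Real.rpow_nonneg (by positivity) _
          have hb2 : (0:ℝ) ≤ (1 + |y|) ^ (-β) := Real.rpow_nonneg (by positivity) _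
          have hc1 : (0:ℝ) ≤ C₀ * (1 + |x|) ^ (-β) := mul_nonneg hC₀.le hb1
          have hc2 : (0:ℝ) ≤ C₀ * (1 + |y|) ^ (-β) := mul_nonneg hC₀.le hb2
          gcongr <;> first
            | exact hV_decay x
            | exact hV_decay y
            | exact hg2
            | exact hc1
            | exact hc2
            | positivity
      _ = A ^ 2 * (C₀ * ((1 + |x|) ^ (-β) * (1 + |x|) ^ (12:ℕ))) *
            (C₀ * ((1 + |y|) ^ (-β) * (1 + |y|) ^ (12:ℕ))) := by ring
      _ = A ^ 2 * h x * h y := by rw [rpow_combine, rpow_combine]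
  -- to ENNReal
  have hpt' : ∀ x y : ℝ, (‖(v x : ℂ) * g x y * (v y : ℂ)‖₊ : ℝ≥0∞) ^ 2 ≤
      (ENNReal.ofReal (A ^ 2) * ENNReal.ofReal (h x)) * ENNReal.ofReal (h y) := by
    intro x y
    have e1 : (‖(v x : ℂ) * g x y * (v y : ℂ)‖₊ : ℝ≥0∞) ^ 2 =
        ENNReal.ofReal (‖(v x : ℂ) * g x y * (v y : ℂ)‖ ^ 2) := by
      rw [ENNReal.ofReal_pow (norm_nonneg _), ofReal_norm, enorm_eq_nnnorm]
    rw [e1, ← ENNReal.ofReal_mul (by positivity), ← ENNReal.ofReal_mul (by positivity)]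
    exact ENNReal.ofReal_le_ofReal (hpt x y)
  set J : ℝ≥0∞ := ∫⁻ t : ℝ, ENNReal.ofReal (h t) with hJ
  calc (∫⁻ x : ℝ, ∫⁻ y : ℝ, (‖(v x : ℂ) * g x y * (v y : ℂ)‖₊ : ℝ≥0∞) ^ 2) ≤
      ∫⁻ x : ℝ, ∫⁻ y : ℝ, (ENNReal.ofReal (A ^ 2) * ENNReal.ofReal (h x)) *
        ENNReal.ofReal (h y) :=
        lintegral_mono fun x => lintegral_mono fun y => hpt' x y
    _ = ∫⁻ x : ℝ, (ENNReal.ofReal (A ^ 2) * ENNReal.ofReal (h x)) * J := by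
        refine lintegral_congr fun x => ?_
        exact lintegral_const_mul' _ _ (by finiteness)
    _ = ∫⁻ x : ℝ, (ENNReal.ofReal (A ^ 2) * J) * ENNReal.ofReal (h x) := by
        refine lintegral_congr fun x => ?_
        ring
    _ = (ENNReal.ofReal (A ^ 2) * J) * J := by
        have hmeas : Measurable fun t : ℝ => ENNReal.ofReal (h t) := by
          refine (Continuous.measurable ?_).ennreal_ofReal
          exact continuous_const.mul
            ((continuous_const.add continuous_abs).rpow_const fun t => Or.inl (by show (1:ℝ) + |t| ≠ 0; positivity))
        exact lintegral_const_mul _ hmeas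
    _ = ENNReal.ofReal (A ^ 2) * J ^ 2 := by ring

lemma J_ne_top (β C₀ : ℝ) (hβ : 13 < β) (hC₀ : 0 < C₀) :
    (∫⁻ t : ℝ, ENNReal.ofReal (C₀ * (1 + |t|) ^ (12 - β))) ≠ ⊤ := by
  have hint : Integrable (fun t : ℝ => (1 + ‖t‖) ^ (-(β - 12))) := by
    apply integrable_one_add_norm
    simp only [Module.finrank_self, Nat.cast_one]
    linarith
  have heq : ∀ t : ℝ, ENNReal.ofReal (C₀ * (1 + |t|) ^ (12 - β)) =
      ENNReal.ofReal C₀ * (‖(1 + ‖t‖) ^ (-(β - 12))‖₊ : ℝ≥0∞) := by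
    intro t
    rw [ENNReal.ofReal_mul hC₀.le]
    congr 1
    rw [Real.norm_eq_abs t, show -(β - 12) = 12 - β by ring,
      ← enorm_eq_nnnorm, Real.enorm_eq_ofReal (Real.rpow_nonneg (by positivity) _)]
  calc (∫⁻ t : ℝ, ENNReal.ofReal (C₀ * (1 + |t|) ^ (12 - β)))
      = ∫⁻ t : ℝ, ENNReal.ofReal C₀ * (‖(1 + ‖t‖) ^ (-(β - 12))‖₊ : ℝ≥0∞) :=
        lintegral_congr heq
    _ = ENNReal.ofReal C₀ * ∫⁻ t : ℝ, (‖(1 + ‖t‖) ^ (-(β - 12))‖₊ : ℝ≥0∞) :=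
        lintegral_const_mul' _ _ (by finiteness)
    _ ≠ ⊤ := ENNReal.mul_ne_top ENNReal.ofReal_ne_top hint.2.ne


/-- Lemma 3.1, regular case: if `|V(x)| ≤ C₀ (1+|x|)^{-β}` with `β > 13`
and `v = |V|^{1/2}`, then the Hilbert–Schmidt norm of `v E(μ) v` is `O(μ³)` and that of
`v ∂_μE(μ) v` is `O(μ²)`:
`(∬ |v(x)E(μ;x,y)v(y)|² dxdy)^{1/2} ≤ C μ³` and
`(∬ |v(x)∂_μE(μ;x,y)v(y)|² dxdy)^{1/2} ≤ C μ²`. -/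
theorem stmt12
    (V : ℝ → ℝ) (hV_meas : Measurable V)
    (β C₀ : ℝ) (hβ : 13 < β) (hC₀ : 0 < C₀)
    (hV_decay : ∀ x : ℝ, |V x| ≤ C₀ * (1 + |x|) ^ (-β))
    (v : ℝ → ℝ) (hv : ∀ x, v x = Real.sqrt |V x|) :
    ∃ C : ℝ, 0 < C ∧
      ∀ μ : ℝ, 0 < μ →
        (∫⁻ x : ℝ, ∫⁻ y : ℝ,
            (‖(v x : ℂ) * resolventError μ x y * (v y : ℂ)‖₊ : ℝ≥0∞) ^ 2) ≤
          ENNReal.ofReal ((C * μ ^ 3) ^ 2) ∧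
        (∫⁻ x : ℝ, ∫⁻ y : ℝ,
            (‖(v x : ℂ) * deriv (fun μ' : ℝ => resolventError μ' x y) μ * (v y : ℂ)‖₊ : ℝ≥0∞) ^ 2) ≤
          ENNReal.ofReal ((C * μ ^ 2) ^ 2) := by
  have hJtop : (∫⁻ t : ℝ, ENNReal.ofReal (C₀ * (1 + |t|) ^ (12 - β))) ≠ ⊤ :=
    J_ne_top β C₀ hβ hC₀
  set Jr : ℝ := (∫⁻ t : ℝ, ENNReal.ofReal (C₀ * (1 + |t|) ^ (12 - β))).toReal with hJr
  have hJrnn : 0 ≤ Jr := ENNReal.toReal_nonneg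
  have hJeq : (∫⁻ t : ℝ, ENNReal.ofReal (C₀ * (1 + |t|) ^ (12 - β))) = ENNReal.ofReal Jr :=
    (ENNReal.ofReal_toReal hJtop).symm
  refine ⟨8 * Jr + 1, by positivity, fun μ hμ => ?_⟩
  constructor
  · have hker := kernel_bound V β C₀ hC₀ hV_decay v hv
      (fun x y => resolventError μ x y) (2 * μ ^ 3) (by positivity)
      (fun x y => norm_resolventError_le μ x y hμ)
    refine hker.trans ?_
    rw [hJeq, ← ENNReal.ofReal_pow hJrnn, ← ENNReal.ofReal_mul (by positivity)]
    apply ENNReal.ofReal_le_ofReal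
    have h6 : (0:ℝ) ≤ μ ^ 6 := by positivity
    nlinarith [sq_nonneg Jr, sq_nonneg μ, mul_nonneg (mul_nonneg hJrnn hJrnn) h6,
      mul_nonneg hJrnn h6]
  · have hker := kernel_bound V β C₀ hC₀ hV_decay v hv
      (fun x y => deriv (fun μ' : ℝ => resolventError μ' x y) μ) (8 * μ ^ 2) (by positivity)
      (fun x y => norm_deriv_resolventError_le μ x y hμ)
    refine hker.trans ?_
    rw [hJeq, ← ENNReal.ofReal_pow hJrnn, ← ENNReal.ofReal_mul (by positivity)]
    apply ENNReal.ofReal_le_ofReal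
    have h4 : (0:ℝ) ≤ μ ^ 4 := by positivity
    nlinarith [sq_nonneg Jr, mul_nonneg (mul_nonneg hJrnn hJrnn) h4, mul_nonneg hJrnn h4]
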